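/- arXiv:2105.02871 — 3 statements merged into one kernel-verified Lean document; each statement's English description precedes it below -/
import Mathlib

section
/- On Sym(3), the vector assigning to each permutation σ the value sgn(σ) is an eigenvector of the Cayley distance kernel matrix [e^{−β·d_C(σ₁,σ₂)}] with eigenvalue e^{−3β}(e^β)(e^β − 1)(e^β − 2). -/
open Equiv

/-- Number of cycles (orbits, including fixed points) of a permutation. -/
def numCycles {N : ℕ} (σ : Perm (Fin N)) : ℕ :=
  (Finset.univ.filter fun x => σ x = x).card + σ.cycleType.card

/-- Cayley distance on `Sym(N)`: `d_C(σ₁,σ₂) = N − #cycles(σ₁⁻¹∘σ₂)`. -/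
def cayleyDist {N : ℕ} (σ₁ σ₂ : Perm (Fin N)) : ℕ :=
  N - numCycles (σ₁⁻¹ * σ₂)

/-- The Cayley distance kernel at inverse temperature `β` on `Sym(N)`. -/
noncomputable def cayleyKernel (N : ℕ) (β : ℝ) :
    Matrix (Perm (Fin N)) (Perm (Fin N)) ℝ :=
  Matrix.of fun σ₁ σ₂ => Real.exp (-β * (cayleyDist σ₁ σ₂ : ℝ))

/-- Every permutation of `Fin 3` is the identity (3 cycles, sign 1), a
transposition (2 cycles, sign -1), or a 3-cycle (1 cycle, sign 1). -/
lemma sym3_class : ∀ τ : Perm (Fin 3),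
    (numCycles τ = 3 ∧ Perm.sign τ = 1) ∨ (numCycles τ = 2 ∧ Perm.sign τ = -1) ∨
    (numCycles τ = 1 ∧ Perm.sign τ = 1) := by decide

/-- The character sum over `Sym(3)`. -/
lemma sym3_key (β : ℝ) :
    ∑ τ : Perm (Fin 3), Real.exp (-β * ((3 - numCycles τ : ℕ) : ℝ)) * ((Perm.sign τ : ℤ) : ℝ)
      = 1 - 3 * Real.exp (-β) + 2 * (Real.exp (-β) * Real.exp (-β)) := by
  have hf : ∀ τ : Perm (Fin 3),
      Real.exp (-β * ((3 - numCycles τ : ℕ) : ℝ)) * ((Perm.sign τ : ℤ) : ℝ)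
        = if numCycles τ = 3 then 1 else
            if numCycles τ = 2 then -Real.exp (-β) else Real.exp (-β) * Real.exp (-β) := by
    intro τ
    rcases sym3_class τ with ⟨h1, h2⟩ | ⟨h1, h2⟩ | ⟨h1, h2⟩ <;>
      simp [h1, h2, ← Real.exp_add] <;> ring_nf
  simp only [hf]
  rw [Finset.sum_ite, Finset.sum_ite, Finset.sum_const, Finset.sum_const, Finset.sum_const]
  rw [show (Finset.univ.filter fun τ : Perm (Fin 3) => numCycles τ = 3).card = 1 from by decide,
      show ((Finset.univ.filter fun τ : Perm (Fin 3) => ¬numCycles τ = 3).filter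
        fun τ => numCycles τ = 2).card = 3 from by decide,
      show ((Finset.univ.filter fun τ : Perm (Fin 3) => ¬numCycles τ = 3).filter
        fun τ => ¬numCycles τ = 2).card = 2 from by decide]
  push_cast
  ring

/-- On `Sym(3)`, the signature vector is an eigenvector of the Cayley distance
kernel with eigenvalue `exp(-3β)·exp(β)·(exp(β)−1)·(exp(β)−2)`. -/
theorem sgn_eigenvector_cayleyKernel_sym3 (β : ℝ) :
    (cayleyKernel 3 β).mulVec (fun σ => ((Perm.sign σ : ℤ) : ℝ))
      = (Real.exp (-3 * β) * Real.exp β * (Real.exp β - 1) * (Real.exp β - 2)) •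
        (fun σ => ((Perm.sign σ : ℤ) : ℝ)) := by
  funext σ
  simp only [Matrix.mulVec, dotProduct, cayleyKernel, Matrix.of_apply, Pi.smul_apply,
    smul_eq_mul]
  rw [← Equiv.sum_comp (Equiv.mulLeft σ)
    (fun σ₂ => Real.exp (-β * (cayleyDist σ σ₂ : ℝ)) * ((Perm.sign σ₂ : ℤ) : ℝ))]
  simp only [Equiv.coe_mulLeft, cayleyDist, inv_mul_cancel_left, map_mul]
  push_cast
  have hcomm : ∀ τ : Perm (Fin 3),
      Real.exp (-β * ((3 - numCycles τ : ℕ) : ℝ))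
          * (((Perm.sign σ : ℤ) : ℝ) * ((Perm.sign τ : ℤ) : ℝ))
        = ((Perm.sign σ : ℤ) : ℝ)
          * (Real.exp (-β * ((3 - numCycles τ : ℕ) : ℝ)) * ((Perm.sign τ : ℤ) : ℝ)) := by
    intro τ; ring
  simp only [hcomm]
  rw [← Finset.mul_sum, sym3_key]
  have e1 : Real.exp (-β) = (Real.exp β)⁻¹ := Real.exp_neg β
  have e3 : Real.exp (-3 * β) = ((Real.exp β)⁻¹)^3 := by
    rw [← Real.exp_neg, ← Real.exp_nat_mul]; ring_nf
  rw [e1, e3]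
  field_simp
  ring
end

section
/- For any N ≥ 1 and β ∈ ℝ, the vector (sgn(σ))_{σ ∈ Sym(N)} is an eigenvector of the Cayley distance kernel matrix K(σ₁,σ₂) = e^{−β·d_C(σ₁,σ₂)}, with eigenvalue e^{−βN} ∏_{k=0}^{N−1}(e^β − k). -/
open Equiv

section Merge

variable {α : Type*} [Fintype α] [DecidableEq α]

lemma merge_support {c : Perm α} {x y : α} (hx : c x = x)
    (hy : c y ≠ y) (hxy : x ≠ y) : (swap x y * c).support = insert x c.support := by
  ext z
  simp only [Perm.mem_support, Finset.mem_insert, Perm.mul_apply]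
  by_cases hzx : z = x
  · subst hzx
    rw [hx, swap_apply_left]
    simp [Ne.symm hxy]
  · by_cases hz : c z = z
    · have hzy : z ≠ y := by rintro rfl; exact hy hz
      rw [hz, swap_apply_of_ne_of_ne hzx hzy]
      simp [hzx, hz]
    · have h1 : c z ≠ x := fun h => hzx (c.injective (h.trans hx.symm))
      by_cases h2 : c z = y
      · rw [show swap x y (c z) = x from by rw [h2, swap_apply_right]]
        constructor
        · intro _; exact Or.inr hz
        · intro _ h; exact hzx h.symm
      · rw [swap_apply_of_ne_of_ne h1 h2]
        simp [hz]

lemma merge_pow {c : Perm α} {x y : α} (hx : c x = x) (hy : c y ≠ y) (hxy : x ≠ y) :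
    ∀ n : ℕ, ∃ i : ℤ, ((swap x y * c) ^ i) x = (c ^ n) y := by
  have hbase : ((swap x y * c) ^ (1 : ℤ)) x = y := by
    simp [Perm.mul_apply, hx, swap_apply_left]
  intro n
  induction n with
  | zero => exact ⟨1, by simpa using hbase⟩
  | succ n ih =>
    obtain ⟨i, hi⟩ := ih
    by_cases h : (c ^ (n + 1)) y = y
    · exact ⟨1, by rw [hbase, h]⟩
    · refine ⟨1 + i, ?_⟩
      have hmem : (c ^ (n + 1)) y ∈ c.support :=
        (Equiv.Perm.pow_apply_mem_support).mpr (Equiv.Perm.mem_support.mpr hy)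
      have hxs : x ∉ c.support := Equiv.Perm.notMem_support.mpr hx
      have hne_x : (c ^ (n + 1)) y ≠ x := fun hcon => hxs (hcon ▸ hmem)
      rw [zpow_add, zpow_one, Perm.mul_apply, hi]
      show swap x y (c ((c ^ n) y)) = (c ^ (n+1)) y
      have hc1 : c ((c ^ n) y) = (c ^ (n + 1)) y := by
        rw [pow_succ']; rfl
      rw [hc1, swap_apply_of_ne_of_ne hne_x h]

lemma merge_isCycle {c : Perm α} (hc : c.IsCycle) {x y : α} (hx : c x = x)
    (hy : c y ≠ y) (hxy : x ≠ y) : (swap x y * c).IsCycle := by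
  refine ⟨x, ?_, fun z hz => ?_⟩
  · show swap x y (c x) ≠ x
    rw [hx, swap_apply_left]; exact Ne.symm hxy
  · have hz' : z ∈ (swap x y * c).support := Equiv.Perm.mem_support.mpr hz
    rw [merge_support hx hy hxy, Finset.mem_insert] at hz'
    rcases hz' with rfl | hz'
    · exact Equiv.Perm.SameCycle.refl _ _
    · obtain ⟨n, hn⟩ := hc.exists_pow_eq hy (Equiv.Perm.mem_support.mp hz')
      obtain ⟨i, hi⟩ := merge_pow hx hy hxy n
      exact ⟨i, by rw [hi, hn]⟩

end Merge

lemma numCycles_add_card_support {N : ℕ} (σ : Perm (Fin N)) :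
    numCycles σ + σ.support.card = N + σ.cycleType.card := by
  unfold numCycles
  have h : σ.support = Finset.univ.filter fun z => ¬ σ z = z := rfl
  have h2 := Finset.card_filter_add_card_filter_not
    (s := (Finset.univ : Finset (Fin N))) (p := fun z => σ z = z)
  rw [Finset.card_univ, Fintype.card_fin] at h2
  rw [h]
  omega

lemma numCycles_swap_mul {N : ℕ} {σ : Perm (Fin N)} {x y : Fin N}
    (hx : σ x = x) (hxy : x ≠ y) :
    numCycles (swap x y * σ) + 1 = numCycles σ := by
  have e1 := numCycles_add_card_support (swap x y * σ)
  have e2 := numCycles_add_card_support σ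
  by_cases hy : σ y = y
  · have hd : (swap x y).Disjoint σ := by
      intro a
      by_cases h1 : a = x
      · exact Or.inr (h1 ▸ hx)
      · by_cases h2 : a = y
        · exact Or.inr (h2 ▸ hy)
        · exact Or.inl (swap_apply_of_ne_of_ne h1 h2)
    have hct : (swap x y * σ).cycleType.card = 1 + σ.cycleType.card := by
      rw [Equiv.Perm.Disjoint.cycleType_mul hd, Multiset.card_add, (Equiv.Perm.isCycle_swap hxy).cycleType,
        Equiv.Perm.card_support_swap hxy]
      simp
    have hsc : (swap x y * σ).support.card = 2 + σ.support.card := by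
      rw [Equiv.Perm.Disjoint.card_support_mul hd, Equiv.Perm.card_support_swap hxy]
    omega
  · set c := σ.cycleOf y with hc_def
    have hc : c.IsCycle := Equiv.Perm.isCycle_cycleOf σ hy
    have hcy : c y ≠ y := by rwa [hc_def, Equiv.Perm.cycleOf_apply_self]
    have hxs : x ∉ σ.support := Equiv.Perm.notMem_support.mpr hx
    have hcs : c.support ⊆ σ.support := Equiv.Perm.support_cycleOf_le σ y
    have hxc : x ∉ c.support := fun h => hxs (hcs h)
    have hcx : c x = x := Equiv.Perm.notMem_support.mp hxc
    have hmem : c ∈ σ.cycleFactorsFinset :=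
      Equiv.Perm.cycleOf_mem_cycleFactorsFinset_iff.mpr (Equiv.Perm.mem_support.mpr hy)
    set ρ := σ * c⁻¹ with hρ_def
    have hdρ : ρ.Disjoint c := Equiv.Perm.disjoint_mul_inv_of_mem_cycleFactorsFinset hmem
    have hσ : c * ρ = σ := by
      rw [← (Equiv.Perm.Disjoint.commute hdρ).eq, hρ_def, inv_mul_cancel_right]
    have hρs : ρ.support ⊆ σ.support := by
      intro a ha
      have := Equiv.Perm.support_mul_le σ c⁻¹ ha
      rw [Finset.sup_eq_union, Finset.mem_union, Equiv.Perm.support_inv] at this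
      rcases this with h | h
      · exact h
      · exact hcs h
    have hms : (swap x y * c).support = insert x c.support := merge_support hcx hcy hxy
    have hmc : (swap x y * c).IsCycle := merge_isCycle hc hcx hcy hxy
    have hd2 : (swap x y * c).Disjoint ρ := by
      rw [Equiv.Perm.disjoint_iff_disjoint_support, hms, Finset.disjoint_insert_left]
      constructor
      · exact fun h => hxs (hρs h)
      · exact (Equiv.Perm.disjoint_iff_disjoint_support.mp hdρ).symm
    have hsplit : swap x y * σ = (swap x y * c) * ρ := by rw [← hσ, mul_assoc]
    have hcard_c : 1 ≤ σ.cycleType.card := by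
      have := Multiset.card_le_card (Equiv.Perm.cycleType_le_of_mem_cycleFactorsFinset hmem)
      rw [hc.cycleType] at this
      simpa using this
    have hct : (swap x y * σ).cycleType.card = σ.cycleType.card := by
      rw [hsplit, Equiv.Perm.Disjoint.cycleType_mul hd2, Multiset.card_add, hmc.cycleType,
        Equiv.Perm.cycleType_mul_inv_mem_cycleFactorsFinset_eq_sub hmem,
        Multiset.card_sub (Equiv.Perm.cycleType_le_of_mem_cycleFactorsFinset hmem),
        hc.cycleType]
      simp only [Multiset.card_singleton]
      omega
    have hsc : (swap x y * σ).support.card = σ.support.card + 1 := by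
      rw [hsplit, Equiv.Perm.Disjoint.card_support_mul hd2, hms, Finset.card_insert_of_notMem hxc,
        ← hσ, Equiv.Perm.Disjoint.card_support_mul (Equiv.Perm.Disjoint.symm hdρ)]
      omega
    omega

lemma decomposeFin_zero_eq {n : ℕ} (e : Perm (Fin n)) :
    Perm.decomposeFin.symm (0, e) = e.extendDomain (finSuccAboveEquiv 0) := by
  ext a
  refine Fin.cases ?_ (fun i => ?_) a
  · rw [Perm.decomposeFin_symm_apply_zero, Perm.extendDomain_apply_not_subtype]
    simp
  · rw [Perm.decomposeFin_symm_apply_succ, swap_self]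
    have h1 : ∀ j : Fin n, ((finSuccAboveEquiv (0 : Fin (n+1))) j : Fin (n+1)) = j.succ := by
      intro j
      rw [finSuccAboveEquiv_apply]
      exact Fin.zero_succAbove j
    rw [show (i.succ : Fin (n+1)) = ((finSuccAboveEquiv (0 : Fin (n+1))) i : Fin (n+1)) from (h1 i).symm]
    rw [Perm.extendDomain_apply_image, h1]
    rfl

lemma numCycles_decompose_zero {n : ℕ} (e : Perm (Fin n)) :
    numCycles (Perm.decomposeFin.symm (0, e)) = numCycles e + 1 := by
  rw [decomposeFin_zero_eq]
  have e1 := numCycles_add_card_support (e.extendDomain (finSuccAboveEquiv 0))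
  have e2 := numCycles_add_card_support e
  rw [Equiv.Perm.cycleType_extendDomain, Equiv.Perm.card_support_extend_domain] at e1
  omega

lemma numCycles_decompose {n : ℕ} (p : Fin (n+1)) (e : Perm (Fin n)) (hp : p ≠ 0) :
    numCycles (Perm.decomposeFin.symm (p, e)) = numCycles e := by
  have hsplit : Perm.decomposeFin.symm (p, e) = swap 0 p * Perm.decomposeFin.symm (0, e) := by
    ext a
    refine Fin.cases ?_ (fun i => ?_) a
    · simp [Perm.mul_apply]
    · simp [Perm.mul_apply]
  have h0 : Perm.decomposeFin.symm (0, e) 0 = 0 := Perm.decomposeFin_symm_apply_zero 0 e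
  have hkey := numCycles_swap_mul (σ := Perm.decomposeFin.symm (0, e)) h0 (Ne.symm hp)
  rw [← hsplit] at hkey
  have h1 := numCycles_decompose_zero e
  omega

lemma signed_cycle_sum (x : ℝ) : ∀ N : ℕ,
    ∑ π : Perm (Fin N), ((Perm.sign π : ℤ) : ℝ) * x ^ numCycles π
      = ∏ k ∈ Finset.range N, (x - k)
  | 0 => by
    haveI : Subsingleton (Perm (Fin 0)) := ⟨fun a b => Equiv.ext fun i => i.elim0⟩
    haveI : Unique (Perm (Fin 0)) := ⟨⟨1⟩, fun a => Subsingleton.elim a 1⟩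
    rw [Finset.prod_range_zero, Finset.univ_unique, Finset.sum_singleton]
    show ((Perm.sign (1 : Perm (Fin 0)) : ℤ) : ℝ) * x ^ numCycles (1 : Perm (Fin 0)) = 1
    have h : numCycles (1 : Perm (Fin 0)) = 0 := by
      simp [numCycles, Equiv.Perm.cycleType_one]
    rw [h]
    simp
  | (N + 1) => by
    rw [Finset.prod_range_succ, ← signed_cycle_sum x N]
    rw [← Equiv.sum_comp (Perm.decomposeFin.symm)
      (fun π : Perm (Fin (N+1)) => ((Perm.sign π : ℤ) : ℝ) * x ^ numCycles π)]
    rw [Fintype.sum_prod_type, Fin.sum_univ_succ]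
    have h0 : ∀ e : Perm (Fin N),
        ((Perm.sign (Perm.decomposeFin.symm ((0 : Fin (N+1)), e)) : ℤ) : ℝ)
          * x ^ numCycles (Perm.decomposeFin.symm (0, e))
        = ((Perm.sign e : ℤ) : ℝ) * x ^ numCycles e * x := by
      intro e
      rw [Perm.decomposeFin.symm_sign, if_pos rfl, one_mul, numCycles_decompose_zero, pow_succ]
      ring
    have h1 : ∀ (i : Fin N) (e : Perm (Fin N)),
        ((Perm.sign (Perm.decomposeFin.symm (i.succ, e)) : ℤ) : ℝ)
          * x ^ numCycles (Perm.decomposeFin.symm (i.succ, e))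
        = -(((Perm.sign e : ℤ) : ℝ) * x ^ numCycles e) := by
      intro i e
      rw [Perm.decomposeFin.symm_sign, if_neg (Fin.succ_ne_zero i),
        numCycles_decompose _ _ (Fin.succ_ne_zero i)]
      push_cast
      ring
    rw [Finset.sum_congr rfl (fun e _ => h0 e)]
    rw [Finset.sum_congr rfl (fun i _ => Finset.sum_congr rfl (fun e _ => h1 i e))]
    rw [Finset.sum_const, Finset.card_univ, Fintype.card_fin, ← Finset.sum_mul,
      Finset.sum_neg_distrib]
    rw [nsmul_eq_mul]
    ring

lemma numCycles_le {N : ℕ} (π : Perm (Fin N)) : numCycles π ≤ N := by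
  have e1 := numCycles_add_card_support π
  have h : π.cycleType.card ≤ π.support.card := by
    have h2 : π.cycleType.card • 1 ≤ π.cycleType.sum :=
      Multiset.card_nsmul_le_sum (fun a ha => (Equiv.Perm.two_le_of_mem_cycleType ha).trans' (by omega))
    rw [Equiv.Perm.sum_cycleType] at h2
    simpa using h2
  omega

/-- For any , the signature vector is an eigenvector of the Cayley distance
kernel with eigenvalue `e^{−βN} ∏_{k=0}^{N−1}(e^β − k)`. -/
theorem sgn_eigenvector_cayleyKernel (N : ℕ) (hN : 1 ≤ N) (β : ℝ) :
    (cayleyKernel N β).mulVec (fun σ => ((Perm.sign σ : ℤ) : ℝ))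
      = (Real.exp (-β * N) * ∏ k ∈ Finset.range N, (Real.exp β - (k : ℝ))) •
        (fun σ => ((Perm.sign σ : ℤ) : ℝ)) := by
  funext σ
  show ∑ τ : Perm (Fin N), cayleyKernel N β σ τ * ((Perm.sign τ : ℤ) : ℝ) = _
  rw [← Equiv.sum_comp (Equiv.mulLeft σ)
    (fun τ : Perm (Fin N) => cayleyKernel N β σ τ * ((Perm.sign τ : ℤ) : ℝ))]
  have hterm : ∀ π : Perm (Fin N),
      cayleyKernel N β σ ((Equiv.mulLeft σ) π) * ((Perm.sign ((Equiv.mulLeft σ) π) : ℤ) : ℝ)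
      = (Real.exp (-β * N) * ((Perm.sign σ : ℤ) : ℝ))
        * (((Perm.sign π : ℤ) : ℝ) * (Real.exp β) ^ numCycles π) := by
    intro π
    have hd : cayleyDist σ (σ * π) = N - numCycles π := by
      unfold cayleyDist
      rw [inv_mul_cancel_left]
    have hle := numCycles_le π
    have hexp : Real.exp (-β * ((cayleyDist σ (σ * π) : ℕ) : ℝ))
        = Real.exp (-β * N) * (Real.exp β) ^ numCycles π := by
      rw [hd, Nat.cast_sub hle]
      rw [show -β * ((N : ℝ) - (numCycles π : ℝ)) = -β * N + (numCycles π : ℝ) * β by ring]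
      rw [Real.exp_add, Real.exp_nat_mul]
    have hsign : ((Perm.sign (σ * π) : ℤ) : ℝ) = ((Perm.sign σ : ℤ) : ℝ) * ((Perm.sign π : ℤ) : ℝ) := by
      rw [map_mul]
      push_cast
      ring
    show Real.exp (-β * ((cayleyDist σ (σ * π) : ℕ) : ℝ)) * ((Perm.sign (σ * π) : ℤ) : ℝ) = _
    rw [hexp, hsign]
    ring
  rw [Finset.sum_congr rfl (fun π _ => hterm π), ← Finset.mul_sum, signed_cycle_sum]
  show _ = (Real.exp (-β * N) * ∏ k ∈ Finset.range N, (Real.exp β - (k : ℝ))) * ((Perm.sign σ : ℤ) : ℝ)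
  ring
end

section
/- If e^β > (N−1)/(2^{1/N} − 1), then the Cayley distance kernel matrix K(σ₁,σ₂) = e^{−β·d_C(σ₁,σ₂)} on Sym(N) is positive definite. -/
open Equiv

open Equiv.Perm Finset Matrix

section Aux
variable {α : Type*} [DecidableEq α] [Fintype α]

/-- a cycle is a product of `support.card - 1` transpositions -/
lemma cycle_swap_list (n : ℕ) : ∀ (c : Perm α), c.support.card = n → c.IsCycle →
    ∃ l : List (Perm α), (∀ s ∈ l, s.IsSwap) ∧ l.prod = c ∧
      l.length = c.support.card - 1 := by
  induction n using Nat.strong_induction_on with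
  | _ n ih =>
    intro c hcard hc
    obtain ⟨x, hx, -⟩ := id hc
    by_cases h2 : c (c x) = x
    · refine ⟨[swap x (c x)], ?_, ?_, ?_⟩
      · rintro s hs
        simp only [List.mem_singleton] at hs
        exact hs ▸ ⟨x, c x, Ne.symm hx, rfl⟩
      · simpa using (hc.eq_swap_of_apply_apply_eq_self hx h2).symm
      · rw [hc.eq_swap_of_apply_apply_eq_self hx h2, card_support_swap (Ne.symm hx)]
        simp
    · have hc' : IsCycle (swap x (c x) * c) := hc.swap_mul hx h2
      have hsupp : (swap x (c x) * c).support = c.support \ {x} :=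
        support_swap_mul_eq c x h2
      have hxmem : x ∈ c.support := mem_support.2 hx
      have hcard' : (swap x (c x) * c).support.card = c.support.card - 1 := by
        rw [hsupp, Finset.sdiff_singleton_eq_erase, Finset.card_erase_of_mem hxmem]
      have hlt : (swap x (c x) * c).support.card < n :=
        hcard ▸ card_support_swap_mul hx
      obtain ⟨l, hl1, hl2, hl3⟩ := ih _ hlt _ rfl hc'
      refine ⟨swap x (c x) :: l, ?_, ?_, ?_⟩
      · rintro s hs
        rcases List.mem_cons.1 hs with rfl | hs
        · exact ⟨x, c x, Ne.symm hx, rfl⟩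
        · exact hl1 s hs
      · rw [List.prod_cons, hl2, ← mul_assoc, Equiv.swap_mul_self, one_mul]
      · have h2le : 2 ≤ c.support.card := two_le_card_support_of_ne_one
          (fun h => hx (by simp [h]))
        rw [List.length_cons, hl3, hcard']
        omega

lemma cycleType_card_le (σ : Perm α) : σ.cycleType.card ≤ σ.support.card := by
  rw [← Equiv.Perm.sum_cycleType]
  calc σ.cycleType.card = σ.cycleType.card • 1 := by simp
    _ ≤ σ.cycleType.sum := Multiset.card_nsmul_le_sum fun x hx =>
        le_trans (by norm_num) (two_le_of_mem_cycleType hx)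

lemma perm_swap_list (σ : Perm α) :
    ∃ l : List (Perm α), (∀ s ∈ l, s.IsSwap) ∧ l.prod = σ ∧
      l.length = σ.support.card - σ.cycleType.card := by
  induction σ using cycle_induction_on with
  | base_one => exact ⟨[], by simp, by simp, by simp⟩
  | base_cycles c hc =>
    obtain ⟨l, h1, h2, h3⟩ := cycle_swap_list c.support.card c rfl hc
    exact ⟨l, h1, h2, by rw [h3, hc.cycleType]; simp⟩
  | induction_disjoint σ τ hd hσ ihσ ihτ =>
    obtain ⟨l1, h11, h12, h13⟩ := ihσ
    obtain ⟨l2, h21, h22, h23⟩ := ihτ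
    refine ⟨l1 ++ l2, ?_, ?_, ?_⟩
    · intro s hs; rcases List.mem_append.1 hs with h | h
      exacts [h11 s h, h21 s h]
    · rw [List.prod_append, h12, h22]
    · rw [List.length_append, h13, h23, hd.card_support_mul, Equiv.Perm.Disjoint.cycleType_mul hd,
        Multiset.card_add]
      have := cycleType_card_le σ
      have := cycleType_card_le τ
      omega

lemma numCycles_eq {N : ℕ} (σ : Perm (Fin N)) :
    numCycles σ = (N - σ.support.card) + σ.cycleType.card := by
  unfold numCycles
  congr 1
  have : (Finset.univ.filter fun x => σ x = x) = univ \ σ.support := by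
    ext x; simp [Equiv.Perm.mem_support]
  rw [this, Finset.card_sdiff_of_subset (Finset.subset_univ _), Finset.card_univ, Fintype.card_fin]

lemma cayleyDist_eq {N : ℕ} (σ₁ σ₂ : Perm (Fin N)) :
    cayleyDist σ₁ σ₂ = (σ₁⁻¹ * σ₂).support.card - (σ₁⁻¹ * σ₂).cycleType.card := by
  unfold cayleyDist
  rw [numCycles_eq]
  have h1 : (σ₁⁻¹ * σ₂).support.card ≤ N := by
    simpa using Finset.card_le_card (Finset.subset_univ (σ₁⁻¹ * σ₂).support)
  have h2 := cycleType_card_le (σ₁⁻¹ * σ₂)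
  omega

lemma numCycles_inv {N : ℕ} (σ : Perm (Fin N)) : numCycles σ⁻¹ = numCycles σ := by
  unfold numCycles
  rw [Equiv.Perm.cycleType_inv]
  congr 2
  ext x
  simp only [Finset.mem_filter, Finset.mem_univ, true_and]
  exact ⟨fun h => by conv_lhs => rw [← h, (by simp : σ (σ⁻¹ x) = x)],
    fun h => by conv_lhs => rw [← h, (by simp : σ⁻¹ (σ x) = x)]⟩

lemma cayleyDist_comm {N : ℕ} (σ₁ σ₂ : Perm (Fin N)) :
    cayleyDist σ₁ σ₂ = cayleyDist σ₂ σ₁ := by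
  unfold cayleyDist
  rw [show σ₂⁻¹ * σ₁ = (σ₁⁻¹ * σ₂)⁻¹ by group, numCycles_inv]

lemma cayleyDist_self {N : ℕ} (σ : Perm (Fin N)) : cayleyDist σ σ = 0 := by
  rw [cayleyDist_eq]; simp

lemma one_le_D {N : ℕ} (τ : Perm (Fin N)) (hτ : τ ≠ 1) :
    1 ≤ τ.support.card - τ.cycleType.card := by
  have h1 : τ.cycleType ≠ 0 := by simpa using hτ
  have h2 : 1 ≤ τ.cycleType.card := Multiset.card_pos.2 h1
  have h3 : τ.cycleType.card • 2 ≤ τ.cycleType.sum :=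
    Multiset.card_nsmul_le_sum (fun x hx => Equiv.Perm.two_le_of_mem_cycleType hx)
  rw [smul_eq_mul] at h3
  rw [← Equiv.Perm.sum_cycleType]
  omega

lemma isSwap_ordered {α : Type*} [DecidableEq α] [LinearOrder α] {s : Equiv.Perm α}
    (hs : s.IsSwap) : ∃ p : α × α, p.1 < p.2 ∧ s = Equiv.swap p.1 p.2 := by
  obtain ⟨x, y, hxy, rfl⟩ := hs
  rcases lt_or_gt_of_ne hxy with h | h
  · exact ⟨(x, y), h, rfl⟩
  · exact ⟨(y, x), h, Equiv.swap_comm x y⟩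

variable {N : ℕ}

noncomputable def pairsOf {j : ℕ} (l : List (Perm (Fin N))) (hlen : l.length = j)
    (hsw : ∀ s ∈ l, s.IsSwap) : Fin j → Fin N × Fin N :=
  fun i => (isSwap_ordered (hsw (l.get (Fin.cast hlen.symm i)) (l.get_mem _))).choose

lemma fiber_card_le (j : ℕ) :
    ((Finset.univ.filter fun τ : Perm (Fin N) =>
        τ.support.card - τ.cycleType.card = j)).card ≤
      ((Finset.univ.filter fun p : Fin N × Fin N => p.1 < p.2)).card ^ j := by
  set P := (Finset.univ.filter fun p : Fin N × Fin N => p.1 < p.2) with hP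
  classical
  have hsub : (Finset.univ.filter fun τ : Perm (Fin N) =>
      τ.support.card - τ.cycleType.card = j) ⊆
      (Fintype.piFinset fun _ : Fin j => P).image
        (fun g => (List.ofFn fun i => Equiv.swap (g i).1 (g i).2).prod) := by
    intro τ hτ
    rw [Finset.mem_filter] at hτ
    obtain ⟨l, hsw, hprod, hlen⟩ := perm_swap_list τ
    rw [hτ.2] at hlen
    refine Finset.mem_image.2 ⟨pairsOf l hlen hsw, ?_, ?_⟩
    · rw [Fintype.mem_piFinset]
      intro i
      have := (isSwap_ordered (hsw (l.get (Fin.cast hlen.symm i)) (l.get_mem _))).choose_spec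
      rw [hP, Finset.mem_filter]
      exact ⟨Finset.mem_univ _, this.1⟩
    · rw [← hprod]
      congr 1
      apply List.ext_get (by simp [hlen])
      intro n h1 h2
      rw [List.get_ofFn]
      have := (isSwap_ordered (hsw (l.get (Fin.cast hlen.symm ⟨n, by simpa [hlen] using h2⟩))
        (l.get_mem _))).choose_spec
      rw [pairsOf, ← this.2]
      congr 1
  calc _ ≤ _ := Finset.card_le_card hsub
    _ ≤ (Fintype.piFinset fun _ : Fin j => P).card := Finset.card_image_le
    _ = P.card ^ j := by rw [Fintype.card_piFinset]; simp

lemma card_pairs_le : 2 * ((Finset.univ.filter fun p : Fin N × Fin N => p.1 < p.2)).card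
    ≤ N * N - N := by
  classical
  set P := (Finset.univ.filter fun p : Fin N × Fin N => p.1 < p.2) with hP
  set Q := P.image Prod.swap with hQ
  have hcardQ : Q.card = P.card := Finset.card_image_of_injective _ Prod.swap_injective
  have hdisj : Disjoint P Q := by
    rw [Finset.disjoint_left]
    intro p hp hq
    rw [hP, Finset.mem_filter] at hp
    rw [hQ, Finset.mem_image] at hq
    obtain ⟨q, hq1, hq2⟩ := hq
    rw [hP, Finset.mem_filter] at hq1
    have : q.2 = p.1 ∧ q.1 = p.2 := by
      constructor <;> (rw [← hq2]; simp)
    exact absurd (this.1 ▸ this.2 ▸ hq1.2) (not_lt.2 hp.2.le)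
  have hsub : P ∪ Q ⊆ Finset.univ.offDiag := by
    intro p hp
    rcases Finset.mem_union.1 hp with h | h
    · rw [hP, Finset.mem_filter] at h
      exact Finset.mem_offDiag.2 ⟨Finset.mem_univ _, Finset.mem_univ _, h.2.ne⟩
    · rw [hQ, Finset.mem_image] at h
      obtain ⟨q, hq1, rfl⟩ := h
      rw [hP, Finset.mem_filter] at hq1
      exact Finset.mem_offDiag.2 ⟨Finset.mem_univ _, Finset.mem_univ _, hq1.2.ne'⟩
  have := Finset.card_le_card hsub
  rw [Finset.card_union_of_disjoint hdisj, hcardQ, Finset.offDiag_card] at this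
  simp only [Finset.card_univ, Fintype.card_prod, Fintype.card_fin] at this ⊢
  omega

lemma exp_beta_bound (N : ℕ) (hN : 0 < N) (β : ℝ)
    (h : ((N : ℝ) - 1) / ((2 : ℝ) ^ ((1 : ℝ) / N) - 1) < Real.exp β) :
    (N : ℝ) * ((N : ℝ) - 1) < Real.exp β := by
  have hN0 : (N : ℝ) ≠ 0 := Nat.cast_ne_zero.2 hN.ne'
  have hNpos : (0 : ℝ) < N := Nat.cast_pos.2 hN
  have hpow : (2 : ℝ) ≤ (1 + 1 / (N : ℝ)) ^ (N : ℕ) := by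
    have := one_add_mul_le_pow (a := 1 / (N : ℝ)) (le_trans (by norm_num) (by positivity : (0:ℝ) ≤ 1 / N)) N
    rw [mul_one_div, div_self hN0] at this
    linarith
  have hroot : (2 : ℝ) ^ ((1 : ℝ) / N) ≤ 1 + 1 / N := by
    have h1 : ((2 : ℝ) ^ ((1 : ℝ) / N)) ≤ (((1 + 1 / (N : ℝ)) ^ (N : ℕ)) : ℝ) ^ ((1 : ℝ) / N) :=
      Real.rpow_le_rpow (by norm_num) hpow (by positivity)
    rwa [← Real.rpow_natCast (1 + 1 / (N : ℝ)), ← Real.rpow_mul (by positivity),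
      mul_one_div, div_self hN0, Real.rpow_one] at h1
  have hdenpos : 0 < (2 : ℝ) ^ ((1 : ℝ) / N) - 1 := by
    have : (1 : ℝ) < 2 ^ ((1 : ℝ) / N) :=
      (Real.one_lt_rpow_iff_of_pos (by norm_num)).2 (Or.inl ⟨by norm_num, by positivity⟩)
    linarith
  have hle : (N : ℝ) ≤ 1 / ((2 : ℝ) ^ ((1 : ℝ) / N) - 1) := by
    have := one_div_le_one_div_of_le hdenpos (by linarith : (2:ℝ) ^ ((1:ℝ)/N) - 1 ≤ 1 / N)
    rwa [one_div_one_div] at this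
  have hfin : (N : ℝ) * ((N : ℝ) - 1) ≤ ((N : ℝ) - 1) / ((2 : ℝ) ^ ((1 : ℝ) / N) - 1) := by
    rw [div_eq_mul_one_div]
    calc (N : ℝ) * ((N : ℝ) - 1) = ((N : ℝ) - 1) * N := by ring
      _ ≤ ((N : ℝ) - 1) * (1 / ((2 : ℝ) ^ ((1 : ℝ) / N) - 1)) := by
          apply mul_le_mul_of_nonneg_left hle
          have : (1 : ℝ) ≤ N := by exact_mod_cast hN
          linarith
  linarith

lemma geo_bound {r : ℝ} (h0 : 0 ≤ r) (h : r < 1 / 2) (N : ℕ) :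
    ∑ j ∈ Finset.Icc 1 N, r ^ j < 1 := by
  have h1 : ∑ j ∈ Finset.Icc 1 N, r ^ j = r * ∑ i ∈ Finset.range N, r ^ i := by
    rw [← Finset.Ico_add_one_right_eq_Icc, Finset.sum_Ico_eq_sum_range]
    rw [Finset.mul_sum]
    exact Finset.sum_congr (by norm_num) fun i _ => by rw [pow_add, pow_one]
  have h2 : ∑ i ∈ Finset.range N, r ^ i ≤ 2 := by
    calc ∑ i ∈ Finset.range N, r ^ i ≤ ∑ i ∈ Finset.range N, (1 / 2 : ℝ) ^ i :=
          Finset.sum_le_sum fun i _ => pow_le_pow_left₀ h0 h.le i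
      _ ≤ 2 := sum_geometric_two_le N
  have h3 : r * ∑ i ∈ Finset.range N, r ^ i ≤ r * 2 := by
    apply mul_le_mul_of_nonneg_left h2 h0
  rw [h1]; linarith

lemma posDef_of_dominant {n : Type*} [Fintype n] [DecidableEq n] (A : Matrix n n ℝ)
    (hsymm : ∀ i j, A i j = A j i) (hpos : ∀ i j, 0 ≤ A i j)
    (hdom : ∀ i, ∑ j ∈ Finset.univ.erase i, A i j < A i i) : A.PosDef := by
  have hherm : A.IsHermitian := by
    ext i j
    simp only [Matrix.conjTranspose_apply, star_trivial]
    exact hsymm j i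
  refine Matrix.posDef_iff_dotProduct_mulVec.mpr ⟨hherm, fun x hx => ?_⟩
  have hQ : dotProduct (star x) (A *ᵥ x) = ∑ i, ∑ j, A i j * x i * x j := by
    simp only [dotProduct, Matrix.mulVec, star_trivial, Pi.star_apply,
      Finset.mul_sum]
    exact Finset.sum_congr rfl fun i _ => Finset.sum_congr rfl fun j _ => by ring
  rw [hQ]
  -- split each row sum into diagonal + off-diagonal
  have hsplit : ∀ i, ∑ j, A i j * x i * x j
      = A i i * x i * x i + ∑ j ∈ Finset.univ.erase i, A i j * x i * x j := by
    intro i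
    exact (Finset.add_sum_erase _ (fun j => A i j * x i * x j) (Finset.mem_univ i)).symm
  -- termwise lower bound on cross terms
  have hcross : ∀ i, ∑ j ∈ Finset.univ.erase i, A i j * x i * x j
      ≥ -∑ j ∈ Finset.univ.erase i, A i j * (x i ^ 2 + x j ^ 2) / 2 := by
    intro i
    rw [ge_iff_le, neg_le, ← Finset.sum_neg_distrib]
    apply Finset.sum_le_sum
    intro j _
    nlinarith [hpos i j, sq_nonneg (x i + x j)]
  -- compute the two off-diagonal quadratic sums
  have hsum1 : ∑ i, ∑ j ∈ Finset.univ.erase i, A i j * x i ^ 2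
      = ∑ i, (∑ j ∈ Finset.univ.erase i, A i j) * x i ^ 2 := by
    exact Finset.sum_congr rfl fun i _ => by rw [Finset.sum_mul]
  have hsum2 : ∑ i, ∑ j ∈ Finset.univ.erase i, A i j * x j ^ 2
      = ∑ i, (∑ j ∈ Finset.univ.erase i, A i j) * x i ^ 2 := by
    have e1 : ∀ i, ∑ j ∈ Finset.univ.erase i, A i j * x j ^ 2
        = (∑ j, A i j * x j ^ 2) - A i i * x i ^ 2 := fun i =>
      Finset.sum_erase_eq_sub (Finset.mem_univ i)
    have e2 : ∀ i, (∑ j ∈ Finset.univ.erase i, A i j) * x i ^ 2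
        = (∑ j, A j i * x i ^ 2) - A i i * x i ^ 2 := by
      intro i
      rw [Finset.sum_mul, ← Finset.sum_erase_eq_sub (Finset.mem_univ i)]
      exact Finset.sum_congr rfl fun j hj => by rw [hsymm i j]
    simp only [e1, e2]
    rw [Finset.sum_sub_distrib, Finset.sum_sub_distrib, Finset.sum_comm]
  by_cases hexists : ∃ i, x i ≠ 0
  · obtain ⟨k, hk⟩ := hexists
    have key : ∑ i, ∑ j, A i j * x i * x j
        ≥ ∑ i, (A i i - ∑ j ∈ Finset.univ.erase i, A i j) * x i ^ 2 := by
      calc ∑ i, ∑ j, A i j * x i * x j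
          = ∑ i, (A i i * x i * x i + ∑ j ∈ Finset.univ.erase i, A i j * x i * x j) :=
            Finset.sum_congr rfl fun i _ => hsplit i
        _ ≥ ∑ i, (A i i * x i * x i - ∑ j ∈ Finset.univ.erase i, A i j * (x i ^ 2 + x j ^ 2) / 2) := by
            apply Finset.sum_le_sum
            intro i _
            have := hcross i
            linarith
        _ = ∑ i, (A i i - ∑ j ∈ Finset.univ.erase i, A i j) * x i ^ 2 := by
            rw [Finset.sum_sub_distrib]
            have expand : ∑ i, ∑ j ∈ Finset.univ.erase i, A i j * (x i ^ 2 + x j ^ 2) / 2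
                = (∑ i, ∑ j ∈ Finset.univ.erase i, A i j * x i ^ 2) / 2
                + (∑ i, ∑ j ∈ Finset.univ.erase i, A i j * x j ^ 2) / 2 := by
              rw [Finset.sum_div, Finset.sum_div, ← Finset.sum_add_distrib]
              refine Finset.sum_congr rfl fun i _ => ?_
              rw [Finset.sum_div, Finset.sum_div, ← Finset.sum_add_distrib]
              refine Finset.sum_congr rfl fun j _ => by ring
            rw [expand, hsum1, hsum2]
            have e3 : ∑ i, A i i * x i * x i = ∑ i, A i i * x i ^ 2 :=
              Finset.sum_congr rfl fun i _ => by ring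
            have e4 : ∑ i, (A i i - ∑ j ∈ Finset.univ.erase i, A i j) * x i ^ 2
                = ∑ i, A i i * x i ^ 2 - ∑ i, (∑ j ∈ Finset.univ.erase i, A i j) * x i ^ 2 := by
              rw [← Finset.sum_sub_distrib]
              exact Finset.sum_congr rfl fun i _ => by ring
            rw [e3, e4]; ring
    have pos : 0 < ∑ i, (A i i - ∑ j ∈ Finset.univ.erase i, A i j) * x i ^ 2 := by
      apply Finset.sum_pos'
      · intro i _
        have := hdom i
        have := sq_nonneg (x i)
        nlinarith
      · refine ⟨k, Finset.mem_univ k, ?_⟩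
        have h1 := hdom k
        have h2 : 0 < x k ^ 2 := by positivity
        nlinarith
    linarith
  · exfalso
    apply hx
    push_neg at hexists
    funext i
    exact hexists i

end Aux

/-- If `e^β > (N−1)/(2^{1/N} − 1)` then the Cayley distance kernel on `Sym(N)`
is positive definite. -/
theorem cayleyKernel_posDef_of_large_beta (N : ℕ) (hN : 0 < N) (β : ℝ)
    (h : ((N : ℝ) - 1) / ((2 : ℝ) ^ ((1 : ℝ) / N) - 1) < Real.exp β) :
    (cayleyKernel N β).PosDef := by
  classical
  set q : ℝ := Real.exp (-β) with hq
  have hq0 : 0 < q := Real.exp_pos _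
  set P := (Finset.univ.filter fun p : Fin N × Fin N => p.1 < p.2) with hPdef
  set r : ℝ := (P.card : ℝ) * q with hrdef
  have hr0 : 0 ≤ r := by positivity
  have hNN : (N : ℝ) * ((N : ℝ) - 1) < Real.exp β := exp_beta_bound N hN β h
  have hr : r < 1 / 2 := by
    have hc : (2 : ℝ) * P.card ≤ (N : ℝ) * ((N : ℝ) - 1) := by
      have h1 : ((2 * P.card : ℕ) : ℝ) ≤ ((N * N - N : ℕ) : ℝ) := Nat.cast_le.2 card_pairs_le
      have h2 : ((N * N - N : ℕ) : ℝ) = (N : ℝ) * ((N : ℝ) - 1) := by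
        have : N ≤ N * N := Nat.le_mul_of_pos_left N hN
        push_cast [Nat.cast_sub this]
        ring
      push_cast at h1
      linarith [h2 ▸ h1]
    have hrq : 2 * r = (2 * (P.card : ℝ)) * q := by ring
    have : 2 * r < Real.exp β * q := by
      rw [hrq]
      rcases eq_or_lt_of_le (by positivity : (0:ℝ) ≤ 2 * (P.card:ℝ)) with h0 | h0
      · rw [← h0, zero_mul]; positivity
      · exact mul_lt_mul_of_pos_right (lt_of_le_of_lt hc hNN) hq0
    rw [hq, ← Real.exp_add] at this
    simp only [add_neg_cancel, Real.exp_zero] at this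
    linarith
  apply posDef_of_dominant
  · intro σ₁ σ₂
    simp only [cayleyKernel, Matrix.of_apply, cayleyDist_comm σ₁ σ₂]
  · intro i j
    exact (Real.exp_pos _).le
  · intro σ₁
    have hdiag : cayleyKernel N β σ₁ σ₁ = 1 := by
      simp [cayleyKernel, cayleyDist_self]
    rw [hdiag]
    have hrow : ∑ σ₂ ∈ Finset.univ.erase σ₁, cayleyKernel N β σ₁ σ₂
        = ∑ τ ∈ (Finset.univ : Finset (Perm (Fin N))).erase 1,
            q ^ (τ.support.card - τ.cycleType.card) := by
      refine Finset.sum_equiv (Equiv.mulLeft σ₁⁻¹) ?_ ?_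
      · intro σ₂
        simp only [Finset.mem_erase, Finset.mem_univ, and_true, Equiv.coe_mulLeft]
        rw [Ne, Ne, inv_mul_eq_one]
        exact ⟨fun h1 h2 => h1 h2.symm, fun h1 h2 => h1 h2.symm⟩
      · intro σ₂ _
        simp only [Equiv.coe_mulLeft, cayleyKernel, Matrix.of_apply]
        rw [cayleyDist_eq, mul_comm, Real.exp_nat_mul]
    rw [hrow]
    have hfib : ∀ τ ∈ (Finset.univ : Finset (Perm (Fin N))).erase 1,
        (τ.support.card - τ.cycleType.card) ∈ Finset.Icc 1 N := by
      intro τ hτ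
      rw [Finset.mem_erase] at hτ
      rw [Finset.mem_Icc]
      refine ⟨one_le_D τ hτ.1, ?_⟩
      have : τ.support.card ≤ N := by
        simpa using Finset.card_le_card (Finset.subset_univ τ.support)
      omega
    rw [← Finset.sum_fiberwise_of_maps_to hfib]
    refine lt_of_le_of_lt ?_ (geo_bound hr0 hr N)
    apply Finset.sum_le_sum
    intro j hj
    have hconst : ∑ τ ∈ (Finset.univ : Finset (Perm (Fin N))).erase 1
          |>.filter (fun τ => τ.support.card - τ.cycleType.card = j),
          q ^ (τ.support.card - τ.cycleType.card)
        = (((Finset.univ : Finset (Perm (Fin N))).erase 1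
          |>.filter (fun τ => τ.support.card - τ.cycleType.card = j)).card : ℝ) * q ^ j := by
      rw [Finset.sum_congr rfl (fun τ hτ => by rw [(Finset.mem_filter.1 hτ).2])]
      rw [Finset.sum_const, nsmul_eq_mul]
    rw [hconst]
    have hcard : (((Finset.univ : Finset (Perm (Fin N))).erase 1
          |>.filter (fun τ => τ.support.card - τ.cycleType.card = j)).card) ≤ P.card ^ j := by
      refine le_trans (Finset.card_le_card (Finset.filter_subset_filter _
        (Finset.erase_subset _ _))) (fiber_card_le j)
    calc _ ≤ ((P.card ^ j : ℕ) : ℝ) * q ^ j := by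
          apply mul_le_mul_of_nonneg_right (Nat.cast_le.2 hcard) (by positivity)
      _ = r ^ j := by rw [hrdef]; push_cast; rw [mul_pow]
end
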